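/- Fix integers ℓ ≥ 2 and p ≥ 2, and let m be a natural number with (ℓ,p)-adic digits (m_i)_{i≥0}. If S and S' are up-admissible sets for m with S ⊆ S', then there exist up-admissible sets S = S_1 ⊆ S_2 ⊆ ⋯ ⊆ S_k = S' for m such that |S_i| = |S_{i−1}| + 1 for all 1 < i ≤ k. -/

import Mathlib

/-- The mixed base: `p^{(0)} = 1` and `p^{(i)} = ℓ·p^{i−1}` for `i ≥ 1`. -/
def mixedPow (ℓ p : ℕ) : ℕ → ℕ
  | 0 => 1
  | i + 1 => ℓ * p ^ i

/-- `S` is up-admissible for the digit sequence `d` (with digits `< ℓ` in position `0` and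
`< p` in positions `≥ 1`): the digit at the minimum of every maximal stretch of `S` is
nonzero, and whenever `s ∈ S` and the digit at `s + 1` equals `p − 1`, also `s + 1 ∈ S`. -/
def UpAdmissible (p : ℕ) (d : ℕ → ℕ) (S : Finset ℕ) : Prop :=
  (∀ s ∈ S, (s = 0 ∨ s - 1 ∉ S) → d s ≠ 0) ∧
  (∀ s ∈ S, d (s + 1) = p - 1 → s + 1 ∈ S)

lemma upAdmissible_step (p : ℕ) (hp : 2 ≤ p) (d : ℕ → ℕ) (S S' : Finset ℕ)
    (hS : UpAdmissible p d S) (hS' : UpAdmissible p d S')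
    (hss : S ⊆ S') (hne : S ≠ S') :
    ∃ x, x ∉ S ∧ x ∈ S' ∧ insert x S ⊆ S' ∧ UpAdmissible p d (insert x S) := by
  classical
  have hD : (S' \ S).Nonempty := by
    rw [Finset.sdiff_nonempty]
    intro h
    exact hne (Finset.Subset.antisymm hss h)
  set t := (S' \ S).min' hD with ht
  have htmem : t ∈ S' \ S := Finset.min'_mem _ _
  set P : ℕ → Prop := fun j => ∀ k ≤ j, t + k ∈ S' \ S ∧ (k = 0 ∨ d (t + k) = p - 1) with hPdef
  have hP0 : P 0 := by
    intro k hk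
    interval_cases k
    exact ⟨by simpa using htmem, Or.inl rfl⟩
  set B := S'.sup id with hB
  set r := Nat.findGreatest P B with hr
  have hPr : P r := Nat.findGreatest_spec (Nat.zero_le B) hP0
  set x := t + r with hx
  have hxmem : x ∈ S' \ S := (hPr r le_rfl).1
  have hxS' : x ∈ S' := (Finset.mem_sdiff.mp hxmem).1
  have hxS : x ∉ S := (Finset.mem_sdiff.mp hxmem).2
  refine ⟨x, hxS, hxS', ?_, ?_, ?_⟩
  · intro y hy
    rcases Finset.mem_insert.mp hy with rfl | h
    · exact hxS'
    · exact hss h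
  · -- condition (1)
    intro s hs hmin
    rcases Finset.mem_insert.mp hs with rfl | hsS
    · rcases Nat.eq_zero_or_pos r with hr0 | hrpos
      · -- r = 0, s = x = t
        have hxt : x = t := by omega
        rcases hmin with hs0 | hs1
        · exact hS'.1 x hxS' (Or.inl hs0)
        · have hxne0 : x ≠ 0 := by
            intro h
            apply hs1
            have : x - 1 = x := by omega
            rw [this]
            exact Finset.mem_insert_self _ _
          have hx1S : x - 1 ∉ S := fun h => hs1 (Finset.mem_insert_of_mem h)
          have hx1S' : x - 1 ∉ S' := by
            intro h
            have hmem : x - 1 ∈ S' \ S := Finset.mem_sdiff.mpr ⟨h, hx1S⟩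
            have := Finset.min'_le _ _ hmem
            omega
          exact hS'.1 x hxS' (Or.inr hx1S')
      · have := (hPr r le_rfl).2
        rcases this with h | h
        · omega
        · rw [← hx] at h
          omega
    · apply hS.1 s hsS
      rcases hmin with h | h
      · exact Or.inl h
      · exact Or.inr fun hc => h (Finset.mem_insert_of_mem hc)
  · -- condition (2)
    intro s hs hd1
    rcases Finset.mem_insert.mp hs with rfl | hsS
    · by_cases hx1 : x + 1 ∈ S
      · exact Finset.mem_insert_of_mem hx1
      · exfalso
        have hx1S' : x + 1 ∈ S' := hS'.2 x hxS' hd1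
        have hPr1 : P (r + 1) := by
          intro k hk
          rcases Nat.lt_or_ge k (r + 1) with h | h
          · exact hPr k (by omega)
          · have hkr : k = r + 1 := by omega
            subst hkr
            have heq : t + (r + 1) = x + 1 := by omega
            rw [heq]
            exact ⟨Finset.mem_sdiff.mpr ⟨hx1S', hx1⟩, Or.inr hd1⟩
        have hxB : x + 1 ≤ B := Finset.le_sup (f := id) hx1S'
        have hrB : r + 1 ≤ B := by omega
        exact Nat.findGreatest_is_greatest (by omega) hrB hPr1
    · exact Finset.mem_insert_of_mem (hS.2 s hsS hd1)

lemma upAdmissible_chain_aux (p : ℕ) (hp : 2 ≤ p) (d : ℕ → ℕ) (S' : Finset ℕ)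
    (hS' : UpAdmissible p d S') :
    ∀ n (S : Finset ℕ), (S' \ S).card = n → UpAdmissible p d S → S ⊆ S' →
    ∃ (k : ℕ) (T : Fin (k + 1) → Finset ℕ),
      T 0 = S ∧ T (Fin.last k) = S' ∧
      (∀ i, UpAdmissible p d (T i)) ∧
      (∀ i : Fin k, T i.castSucc ⊆ T i.succ ∧ (T i.succ).card = (T i.castSucc).card + 1) := by
  intro n
  induction n with
  | zero =>
    intro S hc hS hss
    have hSS' : S = S' := by
      have h0 : S' \ S = ∅ := Finset.card_eq_zero.mp hc
      have h2 : S' ⊆ S := Finset.sdiff_eq_empty_iff_subset.mp h0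
      exact Finset.Subset.antisymm hss h2
    exact ⟨0, fun _ => S, rfl, hSS' ▸ rfl, fun _ => hS, fun i => i.elim0⟩
  | succ n ih =>
    intro S hc hS hss
    have hne : S ≠ S' := by
      intro h
      subst h
      simp at hc
    obtain ⟨x, hxS, hxS', hins, hadm⟩ := upAdmissible_step p hp d S S' hS hS' hss hne
    have hcard : (S' \ insert x S).card = n := by
      have heq : S' \ insert x S = (S' \ S).erase x := by
        ext y
        simp only [Finset.mem_sdiff, Finset.mem_erase, Finset.mem_insert]
        tauto
      rw [heq, Finset.card_erase_of_mem (Finset.mem_sdiff.mpr ⟨hxS', hxS⟩), hc]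
      omega
    obtain ⟨k, T, hT0, hTl, hTadm, hTstep⟩ := ih (insert x S) hcard hadm hins
    refine ⟨k + 1, Fin.cons S T, Fin.cons_zero _ _, ?_, ?_, ?_⟩
    · rw [← Fin.succ_last, Fin.cons_succ]
      exact hTl
    · intro i
      refine Fin.cases ?_ ?_ i
      · simpa using hS
      · intro j
        rw [Fin.cons_succ]
        exact hTadm j
    · intro i
      refine Fin.cases ?_ ?_ i
      · have h1 : Fin.castSucc (0 : Fin (k + 1)) = 0 := rfl
        have h2 : Fin.cons (α := fun _ => Finset ℕ) S T (Fin.succ 0) = T 0 := Fin.cons_succ _ _ _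
        rw [h1, h2, Fin.cons_zero, hT0]
        exact ⟨Finset.subset_insert _ _, Finset.card_insert_of_notMem hxS⟩
      · intro j
        have h1 : Fin.castSucc (Fin.succ j) = Fin.succ (Fin.castSucc j) := (Fin.succ_castSucc j).symm
        have h2 : Fin.succ (Fin.succ j) = Fin.succ (j.succ) := rfl
        rw [h1, h2, Fin.cons_succ, Fin.cons_succ]
        exact hTstep j

/-- Between two nested up-admissible sets `S ⊆ S'` for `m` there is a chain of up-admissible
sets increasing one element at a time. -/
theorem exists_upAdmissible_chain (ℓ p : ℕ) (hℓ : 2 ≤ ℓ) (hp : 2 ≤ p)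
    (m N : ℕ) (d : ℕ → ℕ)
    (hdN : ∀ i, N ≤ i → d i = 0) (hd0 : d 0 < ℓ) (hdi : ∀ i, 1 ≤ i → d i < p)
    (hsum : m + 1 = ∑ i ∈ Finset.range N, d i * mixedPow ℓ p i)
    (S S' : Finset ℕ) (hS : UpAdmissible p d S) (hS' : UpAdmissible p d S')
    (hss : S ⊆ S') :
    ∃ (k : ℕ) (T : Fin (k + 1) → Finset ℕ),
      T 0 = S ∧ T (Fin.last k) = S' ∧
      (∀ i, UpAdmissible p d (T i)) ∧
      (∀ i : Fin k, T i.castSucc ⊆ T i.succ ∧ (T i.succ).card = (T i.castSucc).card + 1) := by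
  exact upAdmissible_chain_aux p hp d S' hS' (S' \ S).card S rfl hS hss
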